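/- Consider the optimal control problem of minimizing J_T(u;f) = (1/2)|y_0|²_{Σ_0} + (1/2)∑_{t=0}^{T-1}(|y_{t+1}|²_Q + |u_t|²_R) over deterministic controls u = (u_0,...,u_{T-1}) ∈ (ℝ^m)^T, subject to the backward dynamics y_t = ∑_{s=1}^{min(τ,T-t)} A_{t+s,s}ᵀ y_{t+s} + Cᵀ u_t with y_T = f. Assume R ≻ 0 and Σ_0, Q ⪰ 0. Then there exists a unique minimizer u^opt, characterized by the forward-backward system: y_t = ∑_{s=1}^{min(τ,T-t)} A_{t+s,s}ᵀ y_{t+s} + Cᵀ u_t^opt with y_T = f; η_t = ∑_{s=1}^{min(τ,t)} A_{t,s} η_{t-s} + Q y_t with η_0 = Σ_0 y_0; and u_t^opt = -R^{-1} C η_t for t = 0,...,T-1. -/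

import Mathlib

open Finset Matrix

namespace OCPAux

noncomputable def yAux (d m T τ : ℕ) (A : ℕ → ℕ → Matrix (Fin d) (Fin d) ℝ)
    (C : Matrix (Fin m) (Fin d) ℝ) (u : ℕ → Fin m → ℝ) (g : Fin d → ℝ) : ℕ → Fin d → ℝ
  | t =>
    if _h : t < T then
      (∑ s ∈ (Icc 1 (min τ (T - t))).attach,
        (A (t + s.1) s.1)ᵀ.mulVec (yAux d m T τ A C u g (t + s.1))) + Cᵀ.mulVec (u t)
    else g
  termination_by t => T - t
  decreasing_by
    have hs := s.2
    simp only [mem_Icc] at hs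
    omega

lemma yAux_lt {d m T τ : ℕ} (A : ℕ → ℕ → Matrix (Fin d) (Fin d) ℝ)
    (C : Matrix (Fin m) (Fin d) ℝ) (u : ℕ → Fin m → ℝ) (g : Fin d → ℝ) {t : ℕ} (h : t < T) :
    yAux d m T τ A C u g t =
      (∑ s ∈ Icc 1 (min τ (T - t)), (A (t + s) s)ᵀ.mulVec (yAux d m T τ A C u g (t + s)))
        + Cᵀ.mulVec (u t) := by
  rw [yAux]
  simp only [h, dif_pos]
  congr 1
  exact Finset.sum_attach _ (fun s => (A (t + s) s)ᵀ.mulVec (yAux d m T τ A C u g (t + s)))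

lemma yAux_ge {d m T τ : ℕ} (A : ℕ → ℕ → Matrix (Fin d) (Fin d) ℝ)
    (C : Matrix (Fin m) (Fin d) ℝ) (u : ℕ → Fin m → ℝ) (g : Fin d → ℝ) {t : ℕ} (h : T ≤ t) :
    yAux d m T τ A C u g t = g := by
  rw [yAux]
  simp only [dif_neg (by omega : ¬ t < T)]

noncomputable def etaAux (d τ : ℕ) (A : ℕ → ℕ → Matrix (Fin d) (Fin d) ℝ)
    (Sig0 Q : Matrix (Fin d) (Fin d) ℝ) (y : ℕ → Fin d → ℝ) : ℕ → Fin d → ℝ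
  | 0 => Sig0.mulVec (y 0)
  | (t + 1) =>
    (∑ s ∈ (Icc 1 (min τ (t + 1))).attach,
      (A (t + 1) s.1).mulVec (etaAux d τ A Sig0 Q y (t + 1 - s.1))) + Q.mulVec (y (t + 1))
  termination_by t => t
  decreasing_by
    have hs := s.2
    simp only [mem_Icc] at hs
    omega

lemma etaAux_zero {d τ : ℕ} (A : ℕ → ℕ → Matrix (Fin d) (Fin d) ℝ)
    (Sig0 Q : Matrix (Fin d) (Fin d) ℝ) (y : ℕ → Fin d → ℝ) :
    etaAux d τ A Sig0 Q y 0 = Sig0.mulVec (y 0) := by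
  rw [etaAux]

lemma etaAux_succ {d τ : ℕ} (A : ℕ → ℕ → Matrix (Fin d) (Fin d) ℝ)
    (Sig0 Q : Matrix (Fin d) (Fin d) ℝ) (y : ℕ → Fin d → ℝ) (t : ℕ) :
    etaAux d τ A Sig0 Q y (t + 1) =
      (∑ s ∈ Icc 1 (min τ (t + 1)), (A (t + 1) s).mulVec (etaAux d τ A Sig0 Q y (t + 1 - s)))
        + Q.mulVec (y (t + 1)) := by
  rw [etaAux]
  congr 1
  exact Finset.sum_attach _ (fun s => (A (t + 1) s).mulVec (etaAux d τ A Sig0 Q y (t + 1 - s)))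


lemma yAux_add {d m T τ : ℕ} (A : ℕ → ℕ → Matrix (Fin d) (Fin d) ℝ)
    (C : Matrix (Fin m) (Fin d) ℝ) (u u' : ℕ → Fin m → ℝ) (g g' : Fin d → ℝ) :
    ∀ t, yAux d m T τ A C (fun n => u n + u' n) (g + g') t
      = yAux d m T τ A C u g t + yAux d m T τ A C u' g' t := by
  suffices H : ∀ k t, T - t ≤ k → yAux d m T τ A C (fun n => u n + u' n) (g + g') t
      = yAux d m T τ A C u g t + yAux d m T τ A C u' g' t from
    fun t => H (T - t) t le_rfl
  intro k
  induction k with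
  | zero =>
    intro t ht
    have h : T ≤ t := by omega
    rw [yAux_ge A C _ _ h, yAux_ge A C _ _ h, yAux_ge A C _ _ h]
  | succ k ih =>
    intro t ht
    by_cases h : t < T
    · rw [yAux_lt A C _ _ h, yAux_lt A C _ _ h, yAux_lt A C _ _ h]
      have hs : ∀ s ∈ Icc 1 (min τ (T - t)),
          (A (t + s) s)ᵀ.mulVec (yAux d m T τ A C (fun n => u n + u' n) (g + g') (t + s))
          = (A (t + s) s)ᵀ.mulVec (yAux d m T τ A C u g (t + s))
            + (A (t + s) s)ᵀ.mulVec (yAux d m T τ A C u' g' (t + s)) := by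
        intro s hsmem
        simp only [mem_Icc] at hsmem
        rw [ih (t + s) (by omega)]
        exact Matrix.mulVec_add _ _ _
      rw [Finset.sum_congr rfl hs, Finset.sum_add_distrib]
      have : Cᵀ.mulVec (u t + u' t) = Cᵀ.mulVec (u t) + Cᵀ.mulVec (u' t) :=
        Matrix.mulVec_add _ _ _
      rw [this]
      abel
    · have h' : T ≤ t := by omega
      rw [yAux_ge A C _ _ h', yAux_ge A C _ _ h', yAux_ge A C _ _ h']

lemma yAux_smul {d m T τ : ℕ} (A : ℕ → ℕ → Matrix (Fin d) (Fin d) ℝ)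
    (C : Matrix (Fin m) (Fin d) ℝ) (c : ℝ) (u : ℕ → Fin m → ℝ) (g : Fin d → ℝ) :
    ∀ t, yAux d m T τ A C (fun n => c • u n) (c • g) t = c • yAux d m T τ A C u g t := by
  suffices H : ∀ k t, T - t ≤ k → yAux d m T τ A C (fun n => c • u n) (c • g) t
      = c • yAux d m T τ A C u g t from fun t => H (T - t) t le_rfl
  intro k
  induction k with
  | zero =>
    intro t ht
    have h : T ≤ t := by omega
    rw [yAux_ge A C _ _ h, yAux_ge A C _ _ h]
  | succ k ih =>
    intro t ht
    by_cases h : t < T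
    · rw [yAux_lt A C _ _ h, yAux_lt A C _ _ h]
      have hs : ∀ s ∈ Icc 1 (min τ (T - t)),
          (A (t + s) s)ᵀ.mulVec (yAux d m T τ A C (fun n => c • u n) (c • g) (t + s))
          = c • (A (t + s) s)ᵀ.mulVec (yAux d m T τ A C u g (t + s)) := by
        intro s hsmem
        simp only [mem_Icc] at hsmem
        rw [ih (t + s) (by omega)]
        exact Matrix.mulVec_smul _ _ _
      rw [Finset.sum_congr rfl hs, ← Finset.smul_sum]
      have : Cᵀ.mulVec (c • u t) = c • Cᵀ.mulVec (u t) := Matrix.mulVec_smul _ _ _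
      rw [this, smul_add]
    · have h' : T ≤ t := by omega
      rw [yAux_ge A C _ _ h', yAux_ge A C _ _ h']

lemma etaAux_add {d τ : ℕ} (A : ℕ → ℕ → Matrix (Fin d) (Fin d) ℝ)
    (Sig0 Q : Matrix (Fin d) (Fin d) ℝ) (y y' : ℕ → Fin d → ℝ) :
    ∀ t, etaAux d τ A Sig0 Q (fun n => y n + y' n) t
      = etaAux d τ A Sig0 Q y t + etaAux d τ A Sig0 Q y' t := by
  intro t
  induction t using Nat.strong_induction_on with
  | _ t ih =>
    match t with
    | 0 =>
      rw [etaAux_zero, etaAux_zero, etaAux_zero]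
      exact Matrix.mulVec_add _ _ _
    | (t + 1) =>
      rw [etaAux_succ, etaAux_succ, etaAux_succ]
      have hs : ∀ s ∈ Icc 1 (min τ (t + 1)),
          (A (t + 1) s).mulVec (etaAux d τ A Sig0 Q (fun n => y n + y' n) (t + 1 - s))
          = (A (t + 1) s).mulVec (etaAux d τ A Sig0 Q y (t + 1 - s))
            + (A (t + 1) s).mulVec (etaAux d τ A Sig0 Q y' (t + 1 - s)) := by
        intro s hsmem
        simp only [mem_Icc] at hsmem
        rw [ih (t + 1 - s) (by omega)]
        exact Matrix.mulVec_add _ _ _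
      rw [Finset.sum_congr rfl hs, Finset.sum_add_distrib]
      have : Q.mulVec (y (t + 1) + y' (t + 1)) = Q.mulVec (y (t + 1)) + Q.mulVec (y' (t + 1)) :=
        Matrix.mulVec_add _ _ _
      rw [this]
      abel

lemma etaAux_smul {d τ : ℕ} (A : ℕ → ℕ → Matrix (Fin d) (Fin d) ℝ)
    (Sig0 Q : Matrix (Fin d) (Fin d) ℝ) (c : ℝ) (y : ℕ → Fin d → ℝ) :
    ∀ t, etaAux d τ A Sig0 Q (fun n => c • y n) t = c • etaAux d τ A Sig0 Q y t := by
  intro t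
  induction t using Nat.strong_induction_on with
  | _ t ih =>
    match t with
    | 0 =>
      rw [etaAux_zero, etaAux_zero]
      exact Matrix.mulVec_smul _ _ _
    | (t + 1) =>
      rw [etaAux_succ, etaAux_succ]
      have hs : ∀ s ∈ Icc 1 (min τ (t + 1)),
          (A (t + 1) s).mulVec (etaAux d τ A Sig0 Q (fun n => c • y n) (t + 1 - s))
          = c • (A (t + 1) s).mulVec (etaAux d τ A Sig0 Q y (t + 1 - s)) := by
        intro s hsmem
        simp only [mem_Icc] at hsmem
        rw [ih (t + 1 - s) (by omega)]
        exact Matrix.mulVec_smul _ _ _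
      rw [Finset.sum_congr rfl hs, ← Finset.smul_sum]
      have : Q.mulVec (c • y (t + 1)) = c • Q.mulVec (y (t + 1)) := Matrix.mulVec_smul _ _ _
      rw [this, smul_add]


lemma sum_dot {n : ℕ} {ι : Type*} (s : Finset ι) (w : ι → Fin n → ℝ) (v : Fin n → ℝ) :
    (∑ i ∈ s, w i) ⬝ᵥ v = ∑ i ∈ s, w i ⬝ᵥ v := by
  simp only [dotProduct, Finset.sum_apply, Finset.sum_mul]
  exact Finset.sum_comm

lemma dot_sum {n : ℕ} {ι : Type*} (s : Finset ι) (v : Fin n → ℝ) (w : ι → Fin n → ℝ) :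
    v ⬝ᵥ (∑ i ∈ s, w i) = ∑ i ∈ s, v ⬝ᵥ w i := by
  simp only [dotProduct, Finset.sum_apply, Finset.mul_sum]
  exact Finset.sum_comm

lemma dot_trans {p q : ℕ} (M : Matrix (Fin p) (Fin q) ℝ) (x : Fin p → ℝ) (w : Fin q → ℝ) :
    (Mᵀ.mulVec x) ⬝ᵥ w = x ⬝ᵥ M.mulVec w := by
  rw [Matrix.mulVec_transpose, ← Matrix.dotProduct_mulVec]

/-- Summation by parts: the cross term identity. -/
lemma cross_sum {d m T τ : ℕ} (A : ℕ → ℕ → Matrix (Fin d) (Fin d) ℝ)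
    (C : Matrix (Fin m) (Fin d) ℝ) (Sig0 Q : Matrix (Fin d) (Fin d) ℝ)
    (y η z : ℕ → Fin d → ℝ) (v : ℕ → Fin m → ℝ)
    (hη0 : η 0 = Sig0.mulVec (y 0))
    (hη : ∀ t, 1 ≤ t → t ≤ T → η t =
      (∑ s ∈ Icc 1 (min τ t), (A t s).mulVec (η (t - s))) + Q.mulVec (y t))
    (hzT : z T = 0)
    (hz : ∀ t < T, z t =
      (∑ s ∈ Icc 1 (min τ (T - t)), (A (t + s) s)ᵀ.mulVec (z (t + s))) + Cᵀ.mulVec (v t)) :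
    ∑ t ∈ range T, v t ⬝ᵥ C.mulVec (η t)
      = z 0 ⬝ᵥ Sig0.mulVec (y 0) + ∑ t ∈ range T, z (t + 1) ⬝ᵥ Q.mulVec (y (t + 1)) := by
  have key1 : ∀ t ∈ range T, v t ⬝ᵥ C.mulVec (η t)
      = z t ⬝ᵥ η t - ∑ s ∈ Icc 1 (min τ (T - t)), z (t + s) ⬝ᵥ (A (t + s) s).mulVec (η t) := by
    intro t ht
    rw [mem_range] at ht
    have h1 : v t ⬝ᵥ C.mulVec (η t) = (Cᵀ.mulVec (v t)) ⬝ᵥ η t := (dot_trans C (v t) (η t)).symm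
    have h2 : Cᵀ.mulVec (v t)
        = z t - ∑ s ∈ Icc 1 (min τ (T - t)), (A (t + s) s)ᵀ.mulVec (z (t + s)) := by
      rw [hz t ht, add_sub_cancel_left]
    rw [h1, h2, sub_dotProduct, sum_dot]
    congr 1
    apply Finset.sum_congr rfl
    intro s _
    exact dot_trans (A (t + s) s) (z (t + s)) (η t)
  have key2 : ∀ t ∈ range T, z (t + 1) ⬝ᵥ Q.mulVec (y (t + 1))
      = z (t + 1) ⬝ᵥ η (t + 1)
        - ∑ s ∈ Icc 1 (min τ (t + 1)), z (t + 1) ⬝ᵥ (A (t + 1) s).mulVec (η (t + 1 - s)) := by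
    intro t ht
    rw [mem_range] at ht
    have h1 : Q.mulVec (y (t + 1))
        = η (t + 1) - ∑ s ∈ Icc 1 (min τ (t + 1)), (A (t + 1) s).mulVec (η (t + 1 - s)) := by
      rw [hη (t + 1) (by omega) (by omega)]
      abel
    rw [h1, dotProduct_sub, dot_sum]
  rw [Finset.sum_congr rfl key1, Finset.sum_congr rfl key2]
  rw [Finset.sum_sub_distrib, Finset.sum_sub_distrib]
  have hzero : z 0 ⬝ᵥ Sig0.mulVec (y 0) = z 0 ⬝ᵥ η 0 := by rw [hη0]
  have hshift : z 0 ⬝ᵥ η 0 + ∑ t ∈ range T, z (t + 1) ⬝ᵥ η (t + 1)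
      = ∑ t ∈ range T, z t ⬝ᵥ η t := by
    have h1 : ∑ t ∈ range (T + 1), z t ⬝ᵥ η t
        = (∑ t ∈ range T, z (t + 1) ⬝ᵥ η (t + 1)) + z 0 ⬝ᵥ η 0 := Finset.sum_range_succ' _ _
    have h2 : ∑ t ∈ range (T + 1), z t ⬝ᵥ η t
        = (∑ t ∈ range T, z t ⬝ᵥ η t) + z T ⬝ᵥ η T := Finset.sum_range_succ _ _
    rw [hzT, zero_dotProduct, add_zero] at h2
    linarith
  have hD : ∑ t ∈ range T, ∑ s ∈ Icc 1 (min τ (T - t)), z (t + s) ⬝ᵥ (A (t + s) s).mulVec (η t)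
      = ∑ t ∈ range T, ∑ s ∈ Icc 1 (min τ (t + 1)),
          z (t + 1) ⬝ᵥ (A (t + 1) s).mulVec (η (t + 1 - s)) := by
    rw [Finset.sum_sigma' (range T) (fun t => Icc 1 (min τ (T - t)))
      (fun t s => z (t + s) ⬝ᵥ (A (t + s) s).mulVec (η t))]
    rw [Finset.sum_sigma' (range T) (fun t => Icc 1 (min τ (t + 1)))
      (fun t s => z (t + 1) ⬝ᵥ (A (t + 1) s).mulVec (η (t + 1 - s)))]
    refine Finset.sum_nbij' (fun p => ⟨p.1 + p.2 - 1, p.2⟩) (fun p => ⟨p.1 + 1 - p.2, p.2⟩)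
      ?_ ?_ ?_ ?_ ?_
    · intro p hp
      simp only [Finset.mem_sigma, Finset.mem_range, Finset.mem_Icc, le_min_iff] at hp ⊢
      omega
    · intro p hp
      simp only [Finset.mem_sigma, Finset.mem_range, Finset.mem_Icc, le_min_iff] at hp ⊢
      omega
    · rintro ⟨p1, p2⟩ hp
      simp only [Finset.mem_sigma, Finset.mem_range, Finset.mem_Icc, le_min_iff] at hp
      dsimp only
      have h : p1 + p2 - 1 + 1 - p2 = p1 := by omega
      rw [h]
    · rintro ⟨p1, p2⟩ hp
      simp only [Finset.mem_sigma, Finset.mem_range, Finset.mem_Icc, le_min_iff] at hp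
      dsimp only
      have h : p1 + 1 - p2 + p2 - 1 = p1 := by omega
      rw [h]
    · rintro ⟨p1, p2⟩ hp
      simp only [Finset.mem_sigma, Finset.mem_range, Finset.mem_Icc, le_min_iff] at hp
      dsimp only
      have h1 : p1 + p2 - 1 + 1 = p1 + p2 := by omega
      rw [h1]
      have h2 : p1 + p2 - p2 = p1 := by omega
      rw [h2]
  rw [hzero, hD]
  rw [← hshift]
  ring


lemma quad_expand {n : ℕ} (M : Matrix (Fin n) (Fin n) ℝ) (hM : Mᵀ = M) (a b : Fin n → ℝ) :
    (a + b) ⬝ᵥ M.mulVec (a + b)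
      = a ⬝ᵥ M.mulVec a + 2 * (b ⬝ᵥ M.mulVec a) + b ⬝ᵥ M.mulVec b := by
  have hsym : a ⬝ᵥ M.mulVec b = b ⬝ᵥ M.mulVec a := by
    rw [← dot_trans M a b, hM, dotProduct_comm]
  rw [Matrix.mulVec_add, dotProduct_add, add_dotProduct, add_dotProduct, hsym]
  ring

/-- The fundamental "gap" identity: for any admissible competitor `(u', y')`,
the cost exceeds the cost of the stationary pair `(u, y)` by a quadratic form. -/
lemma gap_eq {d m T τ : ℕ} (A : ℕ → ℕ → Matrix (Fin d) (Fin d) ℝ)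
    (C : Matrix (Fin m) (Fin d) ℝ) (Sig0 Q : Matrix (Fin d) (Fin d) ℝ)
    (R : Matrix (Fin m) (Fin m) ℝ) (f : Fin d → ℝ)
    (hS : Sig0ᵀ = Sig0) (hQt : Qᵀ = Q) (hRt : Rᵀ = R)
    (u u' : ℕ → Fin m → ℝ) (y y' η : ℕ → Fin d → ℝ)
    (hyT : y T = f)
    (hy : ∀ t < T, y t =
      (∑ s ∈ Icc 1 (min τ (T - t)), (A (t + s) s)ᵀ.mulVec (y (t + s))) + Cᵀ.mulVec (u t))
    (hη0 : η 0 = Sig0.mulVec (y 0))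
    (hη : ∀ t, 1 ≤ t → t ≤ T → η t =
      (∑ s ∈ Icc 1 (min τ t), (A t s).mulVec (η (t - s))) + Q.mulVec (y t))
    (hstat : ∀ t < T, R.mulVec (u t) = -(C.mulVec (η t)))
    (hyT' : y' T = f)
    (hy' : ∀ t < T, y' t =
      (∑ s ∈ Icc 1 (min τ (T - t)), (A (t + s) s)ᵀ.mulVec (y' (t + s))) + Cᵀ.mulVec (u' t)) :
    (1 / 2) * (y' 0 ⬝ᵥ Sig0.mulVec (y' 0)) +
      (1 / 2) * ∑ t ∈ range T, (y' (t + 1) ⬝ᵥ Q.mulVec (y' (t + 1)) + u' t ⬝ᵥ R.mulVec (u' t))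
    = ((1 / 2) * (y 0 ⬝ᵥ Sig0.mulVec (y 0)) +
        (1 / 2) * ∑ t ∈ range T, (y (t + 1) ⬝ᵥ Q.mulVec (y (t + 1)) + u t ⬝ᵥ R.mulVec (u t)))
      + ((1 / 2) * ((y' 0 - y 0) ⬝ᵥ Sig0.mulVec (y' 0 - y 0)) +
          (1 / 2) * ∑ t ∈ range T, ((y' (t + 1) - y (t + 1)) ⬝ᵥ Q.mulVec (y' (t + 1) - y (t + 1))
            + (u' t - u t) ⬝ᵥ R.mulVec (u' t - u t))) := by
  set v : ℕ → Fin m → ℝ := fun t => u' t - u t with hvdef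
  set z : ℕ → Fin d → ℝ := fun t => y' t - y t with hzdef
  have hzapp : ∀ n, y' n - y n = z n := fun n => rfl
  have hvapp : ∀ n, u' n - u n = v n := fun n => rfl
  have hy'e : ∀ n, y' n = y n + z n := fun n => by rw [← hzapp n]; abel
  have hu'e : ∀ n, u' n = u n + v n := fun n => by rw [← hvapp n]; abel
  have hzT : z T = 0 := by rw [← hzapp T, hyT, hyT', sub_self]
  have hzrec : ∀ t < T, z t =
      (∑ s ∈ Icc 1 (min τ (T - t)), (A (t + s) s)ᵀ.mulVec (z (t + s))) + Cᵀ.mulVec (v t) := by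
    intro t ht
    rw [← hzapp t]
    have h1 : y' t - y t
        = ((∑ s ∈ Icc 1 (min τ (T - t)), (A (t + s) s)ᵀ.mulVec (y' (t + s)))
            - ∑ s ∈ Icc 1 (min τ (T - t)), (A (t + s) s)ᵀ.mulVec (y (t + s)))
          + (Cᵀ.mulVec (u' t) - Cᵀ.mulVec (u t)) := by
      rw [hy' t ht, hy t ht]; abel
    rw [h1, ← Finset.sum_sub_distrib]
    congr 1
    · apply Finset.sum_congr rfl
      intro s _
      rw [← Matrix.mulVec_sub, hzapp]
    · rw [← Matrix.mulVec_sub, hvapp]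
  have hcr := cross_sum A C Sig0 Q y η z v hη0 hη hzT hzrec
  have hRu : ∀ t ∈ range T, v t ⬝ᵥ R.mulVec (u t) = -(v t ⬝ᵥ C.mulVec (η t)) := by
    intro t ht
    rw [hstat t (mem_range.mp ht), dotProduct_neg]
  have hzero : z 0 ⬝ᵥ Sig0.mulVec (y 0)
      + ∑ t ∈ range T, (z (t + 1) ⬝ᵥ Q.mulVec (y (t + 1)) + v t ⬝ᵥ R.mulVec (u t)) = 0 := by
    rw [Finset.sum_add_distrib, Finset.sum_congr rfl hRu, Finset.sum_neg_distrib]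
    rw [hcr]
    ring
  have h0 : y' 0 ⬝ᵥ Sig0.mulVec (y' 0)
      = y 0 ⬝ᵥ Sig0.mulVec (y 0) + 2 * (z 0 ⬝ᵥ Sig0.mulVec (y 0)) + z 0 ⬝ᵥ Sig0.mulVec (z 0) := by
    rw [hy'e 0]; exact quad_expand Sig0 hS (y 0) (z 0)
  have hsum : ∑ t ∈ range T, (y' (t + 1) ⬝ᵥ Q.mulVec (y' (t + 1)) + u' t ⬝ᵥ R.mulVec (u' t))
      = ∑ t ∈ range T, (y (t + 1) ⬝ᵥ Q.mulVec (y (t + 1)) + u t ⬝ᵥ R.mulVec (u t))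
        + 2 * ∑ t ∈ range T, (z (t + 1) ⬝ᵥ Q.mulVec (y (t + 1)) + v t ⬝ᵥ R.mulVec (u t))
        + ∑ t ∈ range T, (z (t + 1) ⬝ᵥ Q.mulVec (z (t + 1)) + v t ⬝ᵥ R.mulVec (v t)) := by
    rw [Finset.mul_sum, ← Finset.sum_add_distrib, ← Finset.sum_add_distrib]
    apply Finset.sum_congr rfl
    intro t _
    rw [hy'e (t + 1), hu'e t, quad_expand Q hQt, quad_expand R hRt]
    ring
  simp only [hzapp, hvapp]
  rw [h0, hsum]
  linarith [hzero]


lemma psd_nonneg {n : ℕ} {M : Matrix (Fin n) (Fin n) ℝ} (h : M.PosSemidef) (x : Fin n → ℝ) :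
    0 ≤ x ⬝ᵥ M.mulVec x := by
  have := h.dotProduct_mulVec_nonneg x
  simpa using this

lemma posdef_eq_zero {n : ℕ} {M : Matrix (Fin n) (Fin n) ℝ} (h : M.PosDef) {x : Fin n → ℝ}
    (hx : x ⬝ᵥ M.mulVec x ≤ 0) : x = 0 := by
  by_contra hne
  have := h.dotProduct_mulVec_pos hne
  simp only [star_trivial] at this
  linarith

lemma herm_transpose {n : ℕ} {M : Matrix (Fin n) (Fin n) ℝ} (h : M.IsHermitian) : Mᵀ = M := by
  ext i j
  have h2 := congrFun (congrFun h i) j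
  rw [Matrix.transpose_apply]
  simpa [Matrix.conjTranspose_apply] using h2

def ext0 (m T : ℕ) (uu : Fin T → Fin m → ℝ) : ℕ → Fin m → ℝ :=
  fun t => if h : t < T then uu ⟨t, h⟩ else 0

lemma ext0_add (m T : ℕ) (a b : Fin T → Fin m → ℝ) :
    ext0 m T (a + b) = fun n => ext0 m T a n + ext0 m T b n := by
  funext n
  unfold ext0
  split
  · rfl
  · simp

lemma ext0_smul (m T : ℕ) (c : ℝ) (a : Fin T → Fin m → ℝ) :
    ext0 m T (c • a) = fun n => c • ext0 m T a n := by
  funext n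
  unfold ext0
  split
  · rfl
  · simp

noncomputable def Psi (d m T τ : ℕ) (A : ℕ → ℕ → Matrix (Fin d) (Fin d) ℝ)
    (C : Matrix (Fin m) (Fin d) ℝ) (Sig0 Q : Matrix (Fin d) (Fin d) ℝ)
    (R : Matrix (Fin m) (Fin m) ℝ) :
    (Fin T → Fin m → ℝ) → (Fin T → Fin m → ℝ) :=
  fun uu t => R.mulVec (uu t)
    + C.mulVec (etaAux d τ A Sig0 Q (yAux d m T τ A C (ext0 m T uu) 0) t.1)

lemma psi_add (d m T τ : ℕ) (A : ℕ → ℕ → Matrix (Fin d) (Fin d) ℝ)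
    (C : Matrix (Fin m) (Fin d) ℝ) (Sig0 Q : Matrix (Fin d) (Fin d) ℝ)
    (R : Matrix (Fin m) (Fin m) ℝ) (a b : Fin T → Fin m → ℝ) :
    Psi d m T τ A C Sig0 Q R (a + b) = Psi d m T τ A C Sig0 Q R a + Psi d m T τ A C Sig0 Q R b := by
  funext t
  have hyeq : yAux d m T τ A C (ext0 m T (a + b)) 0
      = fun n => yAux d m T τ A C (ext0 m T a) 0 n + yAux d m T τ A C (ext0 m T b) 0 n := by
    funext n
    rw [ext0_add]
    have := yAux_add (T := T) (τ := τ) A C (ext0 m T a) (ext0 m T b) (0 : Fin d → ℝ) (0 : Fin d → ℝ) n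
    rw [add_zero] at this
    exact this
  have heta := etaAux_add (τ := τ) A Sig0 Q (yAux d m T τ A C (ext0 m T a) 0)
    (yAux d m T τ A C (ext0 m T b) 0) t.1
  show R.mulVec ((a + b) t) + C.mulVec (etaAux d τ A Sig0 Q
      (yAux d m T τ A C (ext0 m T (a + b)) 0) t.1) = _
  rw [hyeq, heta]
  have h1 : (a + b) t = a t + b t := rfl
  rw [h1, Matrix.mulVec_add, Matrix.mulVec_add]
  show _ = (R.mulVec (a t) + C.mulVec (etaAux d τ A Sig0 Q (yAux d m T τ A C (ext0 m T a) 0) t.1))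
    + (R.mulVec (b t) + C.mulVec (etaAux d τ A Sig0 Q (yAux d m T τ A C (ext0 m T b) 0) t.1))
  abel

lemma psi_smul (d m T τ : ℕ) (A : ℕ → ℕ → Matrix (Fin d) (Fin d) ℝ)
    (C : Matrix (Fin m) (Fin d) ℝ) (Sig0 Q : Matrix (Fin d) (Fin d) ℝ)
    (R : Matrix (Fin m) (Fin m) ℝ) (c : ℝ) (a : Fin T → Fin m → ℝ) :
    Psi d m T τ A C Sig0 Q R (c • a) = c • Psi d m T τ A C Sig0 Q R a := by
  funext t
  have hyeq : yAux d m T τ A C (ext0 m T (c • a)) 0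
      = fun n => c • yAux d m T τ A C (ext0 m T a) 0 n := by
    funext n
    rw [ext0_smul]
    have := yAux_smul (T := T) (τ := τ) A C c (ext0 m T a) (0 : Fin d → ℝ) n
    rw [smul_zero] at this
    exact this
  have heta := etaAux_smul (τ := τ) A Sig0 Q c (yAux d m T τ A C (ext0 m T a) 0) t.1
  show R.mulVec ((c • a) t) + C.mulVec (etaAux d τ A Sig0 Q
      (yAux d m T τ A C (ext0 m T (c • a)) 0) t.1) = _
  rw [hyeq, heta]
  have h1 : (c • a) t = c • a t := rfl
  rw [h1, Matrix.mulVec_smul, Matrix.mulVec_smul]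
  show _ = c • (R.mulVec (a t) + C.mulVec (etaAux d τ A Sig0 Q
      (yAux d m T τ A C (ext0 m T a) 0) t.1))
  rw [smul_add]


lemma psi_inj (d m T τ : ℕ) (A : ℕ → ℕ → Matrix (Fin d) (Fin d) ℝ)
    (C : Matrix (Fin m) (Fin d) ℝ) (Sig0 Q : Matrix (Fin d) (Fin d) ℝ)
    (R : Matrix (Fin m) (Fin m) ℝ)
    (hSig0 : Sig0.PosSemidef) (hQ : Q.PosSemidef) (hR : R.PosDef)
    (uu : Fin T → Fin m → ℝ) (huu : Psi d m T τ A C Sig0 Q R uu = 0) : uu = 0 := by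
  have hS : Sig0ᵀ = Sig0 := herm_transpose hSig0.1
  have hQt : Qᵀ = Q := herm_transpose hQ.1
  have hRt : Rᵀ = R := herm_transpose hR.1
  set u : ℕ → Fin m → ℝ := ext0 m T uu with hu
  set y : ℕ → Fin d → ℝ := yAux d m T τ A C u 0 with hy
  set η : ℕ → Fin d → ℝ := etaAux d τ A Sig0 Q y with heta
  have hstat0 : ∀ t, t < T → R.mulVec (u t) + C.mulVec (η t) = 0 := by
    intro t h
    have h1 := congrFun huu ⟨t, h⟩
    have hut : u t = uu ⟨t, h⟩ := by simp [hu, ext0, h]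
    rw [hut]
    exact h1
  have hyT : y T = 0 := yAux_ge A C u 0 le_rfl
  have hyrec : ∀ t < T, y t =
      (∑ s ∈ Icc 1 (min τ (T - t)), (A (t + s) s)ᵀ.mulVec (y (t + s))) + Cᵀ.mulVec (u t) :=
    fun t ht => yAux_lt A C u 0 ht
  have hη0 : η 0 = Sig0.mulVec (y 0) := etaAux_zero A Sig0 Q y
  have hηrec : ∀ t, 1 ≤ t → t ≤ T → η t =
      (∑ s ∈ Icc 1 (min τ t), (A t s).mulVec (η (t - s))) + Q.mulVec (y t) := by
    intro t h1 _
    obtain ⟨k, rfl⟩ : ∃ k, t = k + 1 := ⟨t - 1, by omega⟩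
    exact etaAux_succ A Sig0 Q y k
  have hstat : ∀ t < T, R.mulVec (u t) = -(C.mulVec (η t)) :=
    fun t ht => eq_neg_of_add_eq_zero_left (hstat0 t ht)
  have hy0' : ∀ t < T, (fun _ : ℕ => (0 : Fin d → ℝ)) t =
      (∑ s ∈ Icc 1 (min τ (T - t)),
        (A (t + s) s)ᵀ.mulVec ((fun _ : ℕ => (0 : Fin d → ℝ)) (t + s)))
      + Cᵀ.mulVec ((fun _ : ℕ => (0 : Fin m → ℝ)) t) := by
    intro t _
    simp [Matrix.mulVec_zero]
  have hgap := gap_eq A C Sig0 Q R (0 : Fin d → ℝ) hS hQt hRt u (fun _ => 0) y (fun _ => 0) η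
    hyT hyrec hη0 hηrec hstat rfl hy0'
  simp only [zero_dotProduct, dotProduct_zero, Matrix.mulVec_zero, add_zero, zero_add, mul_zero,
    Finset.sum_const_zero, zero_sub, Matrix.mulVec_neg, dotProduct_neg, neg_dotProduct,
    neg_neg] at hgap
  have ha : 0 ≤ y 0 ⬝ᵥ Sig0.mulVec (y 0) := psd_nonneg hSig0 _
  have hterm : ∀ t ∈ range T,
      0 ≤ y (t + 1) ⬝ᵥ Q.mulVec (y (t + 1)) + u t ⬝ᵥ R.mulVec (u t) := by
    intro t _
    have h1 := psd_nonneg hQ (y (t + 1))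
    have h2 := psd_nonneg hR.posSemidef (u t)
    linarith
  have hsumnn : 0 ≤ ∑ t ∈ range T,
      (y (t + 1) ⬝ᵥ Q.mulVec (y (t + 1)) + u t ⬝ᵥ R.mulVec (u t)) :=
    Finset.sum_nonneg hterm
  have hsum0 : ∑ t ∈ range T,
      (y (t + 1) ⬝ᵥ Q.mulVec (y (t + 1)) + u t ⬝ᵥ R.mulVec (u t)) = 0 := by linarith
  have heach := (Finset.sum_eq_zero_iff_of_nonneg hterm).mp hsum0
  funext t
  have ht := t.2
  have h1 := heach t.1 (Finset.mem_range.mpr ht)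
  have h2 := psd_nonneg hQ (y (t.1 + 1))
  have h3 : u t.1 ⬝ᵥ R.mulVec (u t.1) ≤ 0 := by linarith
  have h4 : u t.1 = 0 := posdef_eq_zero hR h3
  have hut : u t.1 = uu t := by simp [hu, ext0, ht]
  rw [← hut, h4]
  rfl

end OCPAux

section

variable (d m T τ : ℕ)
variable (A : ℕ → ℕ → Matrix (Fin d) (Fin d) ℝ) (C : Matrix (Fin m) (Fin d) ℝ)
variable (Sig0 Q : Matrix (Fin d) (Fin d) ℝ) (R : Matrix (Fin m) (Fin m) ℝ)
variable (f : Fin d → ℝ)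

/-- `y` is the backward dual process for control `u` and terminal condition `f`. -/
def IsDual (u : ℕ → Fin m → ℝ) (y : ℕ → Fin d → ℝ) : Prop :=
  y T = f ∧ ∀ t < T, y t =
    (∑ s ∈ Icc 1 (min τ (T - t)), (A (t + s) s)ᵀ.mulVec (y (t + s))) + Cᵀ.mulVec (u t)

/-- The optimal control cost `J_T(u;f)`, expressed through the dual state `y`. -/
noncomputable def costJ (u : ℕ → Fin m → ℝ) (y : ℕ → Fin d → ℝ) : ℝ :=
  (1 / 2) * (y 0 ⬝ᵥ Sig0.mulVec (y 0)) +
    (1 / 2) * ∑ t ∈ range T, (y (t + 1) ⬝ᵥ Q.mulVec (y (t + 1)) + u t ⬝ᵥ R.mulVec (u t))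

/-- the OCP has a unique minimizer, characterized by the
forward-backward system with the optimal control formula `u_t = -R⁻¹ C η_t`. -/
theorem ocp_linear_existence_uniqueness
    (hSig0 : Sig0.PosSemidef) (hQ : Q.PosSemidef) (hR : R.PosDef) (hT : 1 ≤ T) :
    ∃ (u : ℕ → Fin m → ℝ) (y η : ℕ → Fin d → ℝ),
      -- backward equation with the optimal control
      IsDual d m T τ A C f u y ∧
      -- forward equation for the momentum process
      η 0 = Sig0.mulVec (y 0) ∧
      (∀ t, 1 ≤ t → t ≤ T → η t =
        (∑ s ∈ Icc 1 (min τ t), (A t s).mulVec (η (t - s))) + Q.mulVec (y t)) ∧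
      -- optimal control formula
      (∀ t < T, u t = -(R⁻¹.mulVec (C.mulVec (η t)))) ∧
      -- optimality
      (∀ (u' : ℕ → Fin m → ℝ) (y' : ℕ → Fin d → ℝ), IsDual d m T τ A C f u' y' →
        costJ d m T Sig0 Q R u y ≤ costJ d m T Sig0 Q R u' y') ∧
      -- uniqueness of the minimizer
      (∀ (u' : ℕ → Fin m → ℝ) (y' : ℕ → Fin d → ℝ), IsDual d m T τ A C f u' y' →
        costJ d m T Sig0 Q R u' y' = costJ d m T Sig0 Q R u y →
        ∀ t < T, u' t = u t) := by

  classical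
  have hS : Sig0ᵀ = Sig0 := OCPAux.herm_transpose hSig0.1
  have hQt : Qᵀ = Q := OCPAux.herm_transpose hQ.1
  have hRt : Rᵀ = R := OCPAux.herm_transpose hR.1
  let F : (Fin T → Fin m → ℝ) →ₗ[ℝ] (Fin T → Fin m → ℝ) :=
    { toFun := OCPAux.Psi d m T τ A C Sig0 Q R
      map_add' := OCPAux.psi_add d m T τ A C Sig0 Q R
      map_smul' := OCPAux.psi_smul d m T τ A C Sig0 Q R }
  have hinj : Function.Injective F :=
    (injective_iff_map_eq_zero F).mpr
      (fun a ha => OCPAux.psi_inj d m T τ A C Sig0 Q R hSig0 hQ hR a ha)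
  have hsurj : Function.Surjective F := LinearMap.injective_iff_surjective.mp hinj
  obtain ⟨uu, hFuu⟩ := hsurj (fun t => -(C.mulVec (OCPAux.etaAux d τ A Sig0 Q
    (OCPAux.yAux d m T τ A C (fun _ => 0) f) t.1)))
  set u : ℕ → Fin m → ℝ := OCPAux.ext0 m T uu with hu
  set y : ℕ → Fin d → ℝ := OCPAux.yAux d m T τ A C u f with hy
  set η : ℕ → Fin d → ℝ := OCPAux.etaAux d τ A Sig0 Q y with heta
  have hysplit : y = fun n => OCPAux.yAux d m T τ A C u 0 n
      + OCPAux.yAux d m T τ A C (fun _ => 0) f n := by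
    funext n
    rw [hy]
    have h1 := OCPAux.yAux_add (T := T) (τ := τ) A C u (fun _ => 0) (0 : Fin d → ℝ) f n
    rw [zero_add] at h1
    have h2 : (fun k => u k + (fun _ : ℕ => (0 : Fin m → ℝ)) k) = u := by funext k; simp
    rw [h2] at h1
    exact h1
  have hetasplit : ∀ t, η t = OCPAux.etaAux d τ A Sig0 Q (OCPAux.yAux d m T τ A C u 0) t
      + OCPAux.etaAux d τ A Sig0 Q (OCPAux.yAux d m T τ A C (fun _ => 0) f) t := by
    intro t
    rw [heta, hysplit]
    have h1 := OCPAux.etaAux_add (τ := τ) A Sig0 Q (OCPAux.yAux d m T τ A C u 0)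
      (OCPAux.yAux d m T τ A C (fun _ => 0) f) t
    exact h1
  have hstat0 : ∀ t < T, R.mulVec (u t) + C.mulVec (η t) = 0 := by
    intro t ht
    have h1 : R.mulVec (uu ⟨t, ht⟩)
        + C.mulVec (OCPAux.etaAux d τ A Sig0 Q (OCPAux.yAux d m T τ A C u 0) t)
        = -(C.mulVec (OCPAux.etaAux d τ A Sig0 Q
            (OCPAux.yAux d m T τ A C (fun _ => 0) f) t)) := congrFun hFuu ⟨t, ht⟩
    have hut : u t = uu ⟨t, ht⟩ := by simp [hu, OCPAux.ext0, ht]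
    rw [hetasplit t, Matrix.mulVec_add, hut, ← add_assoc, h1]
    exact neg_add_cancel _
  have hyT : y T = f := OCPAux.yAux_ge A C u f le_rfl
  have hyrec : ∀ t < T, y t =
      (∑ s ∈ Icc 1 (min τ (T - t)), (A (t + s) s)ᵀ.mulVec (y (t + s))) + Cᵀ.mulVec (u t) :=
    fun t ht => OCPAux.yAux_lt A C u f ht
  have hη0 : η 0 = Sig0.mulVec (y 0) := OCPAux.etaAux_zero A Sig0 Q y
  have hηrec : ∀ t, 1 ≤ t → t ≤ T → η t =
      (∑ s ∈ Icc 1 (min τ t), (A t s).mulVec (η (t - s))) + Q.mulVec (y t) := by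
    intro t h1 _
    obtain ⟨k, rfl⟩ : ∃ k, t = k + 1 := ⟨t - 1, by omega⟩
    exact OCPAux.etaAux_succ A Sig0 Q y k
  have hstat : ∀ t < T, R.mulVec (u t) = -(C.mulVec (η t)) :=
    fun t ht => eq_neg_of_add_eq_zero_left (hstat0 t ht)
  refine ⟨u, y, η, ⟨hyT, hyrec⟩, hη0, hηrec, ?_, ?_, ?_⟩
  · intro t ht
    have hdet : IsUnit R.det := isUnit_iff_ne_zero.mpr hR.det_pos.ne'
    have h2 : R⁻¹.mulVec (R.mulVec (u t)) = u t := by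
      rw [Matrix.mulVec_mulVec, Matrix.nonsing_inv_mul R hdet, Matrix.one_mulVec]
    rw [← h2, hstat t ht, Matrix.mulVec_neg]
  · intro u' y' hd'
    obtain ⟨hyT', hy'⟩ := hd'
    have hgap := OCPAux.gap_eq A C Sig0 Q R f hS hQt hRt u u' y y' η
      hyT hyrec hη0 hηrec hstat hyT' hy'
    have hq1 : 0 ≤ (y' 0 - y 0) ⬝ᵥ Sig0.mulVec (y' 0 - y 0) := OCPAux.psd_nonneg hSig0 _
    have hq2 : 0 ≤ ∑ t ∈ range T, ((y' (t + 1) - y (t + 1)) ⬝ᵥ Q.mulVec (y' (t + 1) - y (t + 1))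
        + (u' t - u t) ⬝ᵥ R.mulVec (u' t - u t)) :=
      Finset.sum_nonneg (fun t _ => add_nonneg (OCPAux.psd_nonneg hQ _)
        (OCPAux.psd_nonneg hR.posSemidef _))
    simp only [costJ]
    linarith
  · intro u' y' hd' hcost t ht
    obtain ⟨hyT', hy'⟩ := hd'
    have hgap := OCPAux.gap_eq A C Sig0 Q R f hS hQt hRt u u' y y' η
      hyT hyrec hη0 hηrec hstat hyT' hy'
    simp only [costJ] at hcost
    have hq1 : 0 ≤ (y' 0 - y 0) ⬝ᵥ Sig0.mulVec (y' 0 - y 0) := OCPAux.psd_nonneg hSig0 _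
    have hterm : ∀ s ∈ range T,
        0 ≤ (y' (s + 1) - y (s + 1)) ⬝ᵥ Q.mulVec (y' (s + 1) - y (s + 1))
          + (u' s - u s) ⬝ᵥ R.mulVec (u' s - u s) :=
      fun s _ => add_nonneg (OCPAux.psd_nonneg hQ _) (OCPAux.psd_nonneg hR.posSemidef _)
    have hsum0 : ∑ s ∈ range T, ((y' (s + 1) - y (s + 1)) ⬝ᵥ Q.mulVec (y' (s + 1) - y (s + 1))
        + (u' s - u s) ⬝ᵥ R.mulVec (u' s - u s)) = 0 := by
      have hnn := Finset.sum_nonneg hterm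
      linarith
    have heach := (Finset.sum_eq_zero_iff_of_nonneg hterm).mp hsum0 t (Finset.mem_range.mpr ht)
    have h2 : (u' t - u t) ⬝ᵥ R.mulVec (u' t - u t) ≤ 0 := by
      have := OCPAux.psd_nonneg hQ (y' (t + 1) - y (t + 1))
      linarith
    exact sub_eq_zero.mp (OCPAux.posdef_eq_zero hR h2)

end
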